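/- Let 1 ≤ q < ∞ and ε > 0. Choose m ∈ ℤ₊ such that 1 − ε^q Σ_{k=1}^{m} 1/t_k^q ≥ 0 and 1 − ε^q Σ_{k=1}^{m+1} 1/t_k^q < 0 (such m exists since t is bounded away from growth: Σ_{k=1}^{m} 1/t_k^q → ∞). Then E(W^T_q, I_{ε,∞}) = E(W^T_q, I_{ε,∞}, Φ*_m) = ( t_{m+1}^q + ε^q Σ_{k=1}^{m} (1 − t_{m+1}^q/t_k^q) )^{1/q}. -/

import Mathlib

open scoped ENNReal NNReal BigOperators

/-- The `ℓ_q` (quasi-)norm `(∑ |x_k|^q)^{1/q}` of a complex sequence, valued in `ℝ≥0∞`. -/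
noncomputable def lqNorm (q : ℝ) (x : ℕ → ℂ) : ℝ≥0∞ :=
  (∑' k, (‖x k‖₊ : ℝ≥0∞) ^ q) ^ (1 / q)

/-- The class `W^T_q = {Th : h ∈ ℓ_q, ‖h‖_q ≤ 1}`, where `T` is the diagonal operator
determined by the sequence `t` (0-based indexing: `t k` is the paper's `t_{k+1}`). -/
def WT (q : ℝ) (t : ℕ → ℝ) : Set (ℕ → ℂ) :=
  {x | ∃ h : ℕ → ℂ, (∀ k, x k = (t k : ℂ) * h k) ∧ lqNorm q h ≤ 1}

/-- The error `E(W, I, Φ) = sup_{x ∈ W} sup_{a ∈ I x} ‖x - Φ a‖_q` of a recovery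
method `Φ`, measured in `ℓ_q`. -/
noncomputable def recErr {Z : Type*} (q : ℝ) (W : Set (ℕ → ℂ))
    (I : (ℕ → ℂ) → Set Z) (Φ : Z → ℕ → ℂ) : ℝ≥0∞ :=
  ⨆ x ∈ W, ⨆ a ∈ I x, lqNorm q (fun k => x k - Φ a k)

/-- The error of optimal recovery `E(W, I) = inf_Φ E(W, I, Φ)`. -/
noncomputable def optErr {Z : Type*} (q : ℝ) (W : Set (ℕ → ℂ))
    (I : (ℕ → ℂ) → Set Z) : ℝ≥0∞ :=
  ⨅ Φ : Z → ℕ → ℂ, recErr q W I Φ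

/-- The method `Φ*_m(a) = (a_1(1 − t_{m+1}^q/t_1^q), …, a_m(1 − t_{m+1}^q/t_m^q), 0, …)`
for information consisting of the first `n` coordinates (0-based: `t m` is the paper's
`t_{m+1}`); `PhiStar q t n 0` is the zero method `Φ*_0`. -/
noncomputable def PhiStar (q : ℝ) (t : ℕ → ℝ) (n m : ℕ) (a : Fin n → ℂ) : ℕ → ℂ :=
  fun k => if h : k < n ∧ k < m then ((1 - t m ^ q / t k ^ q : ℝ) : ℂ) * a ⟨k, h.1⟩ else 0

/-- The method `Φ*_m` for full-sequence information:
`Φ*_m(a) = (a_1(1 − t_{m+1}^q/t_1^q), …, a_m(1 − t_{m+1}^q/t_m^q), 0, …)`. -/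
noncomputable def PhiStarFull (q : ℝ) (t : ℕ → ℝ) (m : ℕ) (a : ℕ → ℂ) : ℕ → ℂ :=
  fun k => if k < m then ((1 - t m ^ q / t k ^ q : ℝ) : ℂ) * a k else 0

/-- The information mapping `I_{ε,∞}(x) = x + B[ε, ℓ_∞] = {a : ‖x − a‖_∞ ≤ ε}`. -/
def infoSupFull (ε : ℝ) (x : ℕ → ℂ) : Set (ℕ → ℂ) :=
  {a | ∀ k, ‖x k - a k‖ ≤ ε}

/- ### Auxiliary lemmas -/

lemma enn_minkowski {q : ℝ} (hq : 1 ≤ q) (f g : ℕ → ℝ≥0∞) :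
    (∑' k, (f k + g k) ^ q) ^ (1/q) ≤ (∑' k, f k ^ q) ^ (1/q) + (∑' k, g k ^ q) ^ (1/q) := by
  have hf : AEMeasurable f (MeasureTheory.Measure.count : MeasureTheory.Measure ℕ) :=
    (measurable_of_countable f).aemeasurable
  have hg : AEMeasurable g (MeasureTheory.Measure.count : MeasureTheory.Measure ℕ) :=
    (measurable_of_countable g).aemeasurable
  simpa [MeasureTheory.lintegral_count] using ENNReal.lintegral_Lp_add_le hf hg hq

lemma lqNorm_add_le {q : ℝ} (hq : 1 ≤ q) (u v : ℕ → ℂ) :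
    lqNorm q (fun k => u k + v k) ≤ lqNorm q u + lqNorm q v := by
  have hq0 : (0:ℝ) < q := lt_of_lt_of_le one_pos hq
  refine le_trans ?_ (enn_minkowski hq (fun k => (‖u k‖₊ : ℝ≥0∞)) (fun k => (‖v k‖₊ : ℝ≥0∞)))
  unfold lqNorm
  refine ENNReal.rpow_le_rpow ?_ (by positivity)
  refine ENNReal.tsum_le_tsum fun k => ?_
  refine ENNReal.rpow_le_rpow ?_ hq0.le
  rw [← ENNReal.coe_add]
  exact_mod_cast nnnorm_add_le (u k) (v k)

lemma lqNorm_neg (q : ℝ) (x : ℕ → ℂ) : lqNorm q (fun k => -x k) = lqNorm q x := by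
  simp [lqNorm]

lemma lqNorm_two_smul {q : ℝ} (hq0 : 0 < q) (x : ℕ → ℂ) :
    lqNorm q (fun k => (2:ℂ) * x k) = 2 * lqNorm q x := by
  unfold lqNorm
  have h1 : ∀ k, (‖(2:ℂ) * x k‖₊ : ℝ≥0∞) ^ q = (2:ℝ≥0∞) ^ q * (‖x k‖₊ : ℝ≥0∞) ^ q := by
    intro k
    rw [nnnorm_mul, ENNReal.coe_mul, ENNReal.mul_rpow_of_nonneg _ _ hq0.le]
    norm_num
  simp_rw [h1]
  rw [ENNReal.tsum_mul_left, ENNReal.mul_rpow_of_nonneg _ _ (by positivity : (0:ℝ) ≤ 1/q),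
    ← ENNReal.rpow_mul]
  rw [mul_one_div_cancel hq0.ne', ENNReal.rpow_one]

lemma tsum_le_one_of_lqNorm {q : ℝ} (hq0 : 0 < q) (h : ℕ → ℂ) (hh : lqNorm q h ≤ 1) :
    ∑' k, (‖h k‖₊ : ℝ≥0∞) ^ q ≤ 1 := by
  have := ENNReal.rpow_le_rpow hh hq0.le
  rw [ENNReal.one_rpow, lqNorm, ← ENNReal.rpow_mul, one_div_mul_cancel hq0.ne',
    ENNReal.rpow_one] at this
  exact this

lemma convex_rpow_ineq {q a b l : ℝ} (hq : 1 ≤ q) (ha : 0 ≤ a) (hb : 0 ≤ b)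
    (hl0 : 0 ≤ l) (hl1 : l ≤ 1) :
    ((1 - l) * a + l * b) ^ q ≤ (1 - l) * a ^ q + l * b ^ q := by
  have := (convexOn_rpow hq).2 (Set.mem_Ici.2 ha) (Set.mem_Ici.2 hb)
    (by linarith : (0:ℝ) ≤ 1 - l) hl0 (by ring)
  simpa using this

lemma enn_nnnorm_rpow {q : ℝ} (hq0 : 0 < q) (y : ℂ) :
    (‖y‖₊ : ℝ≥0∞) ^ q = ENNReal.ofReal (‖y‖ ^ q) := by
  rw [← ENNReal.ofReal_rpow_of_nonneg (norm_nonneg y) hq0.le, ofReal_norm]; rfl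


lemma le_recErr {Z : Type*} {q : ℝ} {W : Set (ℕ → ℂ)} {I : (ℕ → ℂ) → Set Z}
    {Φ : Z → ℕ → ℂ} {x : ℕ → ℂ} {a : Z} (hx : x ∈ W) (ha : a ∈ I x) :
    lqNorm q (fun k => x k - Φ a k) ≤ recErr q W I Φ := by
  unfold recErr
  exact le_iSup₂_of_le x hx (le_iSup₂_of_le a ha le_rfl)

lemma recErr_le {Z : Type*} {q : ℝ} {W : Set (ℕ → ℂ)} {I : (ℕ → ℂ) → Set Z}
    {Φ : Z → ℕ → ℂ} {C : ℝ≥0∞}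
    (h : ∀ x ∈ W, ∀ a ∈ I x, lqNorm q (fun k => x k - Φ a k) ≤ C) :
    recErr q W I Φ ≤ C := by
  unfold recErr
  exact iSup₂_le fun x hx => iSup₂_le (h x hx)
/-- Theorem 5: optimal recovery of `W^T_q` from the whole sequence known
with an error measured in `ℓ_∞`. -/
theorem optimal_recovery_full_sup_error
    (q : ℝ) (hq : 1 ≤ q)
    (t : ℕ → ℝ) (htpos : ∀ k, 0 < t k) (htmono : Antitone t)
    (ε : ℝ) (hε : 0 < ε) (m : ℕ)
    (hm : 1 - ε ^ q * ∑ k ∈ Finset.range m, 1 / t k ^ q ≥ 0 ∧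
          1 - ε ^ q * ∑ k ∈ Finset.range (m + 1), 1 / t k ^ q < 0) :
    optErr q (WT q t) (infoSupFull ε) =
      recErr q (WT q t) (infoSupFull ε) (PhiStarFull q t m) ∧
    recErr q (WT q t) (infoSupFull ε) (PhiStarFull q t m) =
      ENNReal.ofReal
        ((t m ^ q + ε ^ q * ∑ k ∈ Finset.range m, (1 - t m ^ q / t k ^ q)) ^ (1 / q)) := by
  obtain ⟨hm1, hm2⟩ := hm
  have hq0 : (0:ℝ) < q := lt_of_lt_of_le one_pos hq
  set S : ℝ := ∑ k ∈ Finset.range m, 1 / t k ^ q with hS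
  set E : ℝ := t m ^ q + ε ^ q * ∑ k ∈ Finset.range m, (1 - t m ^ q / t k ^ q) with hE
  have htq : ∀ k, (0:ℝ) < t k ^ q := fun k => Real.rpow_pos_of_pos (htpos k) q
  have hεq : (0:ℝ) < ε ^ q := Real.rpow_pos_of_pos hε q
  have hlam : ∀ k, k ≤ m → t m ^ q / t k ^ q ≤ 1 := by
    intro k hk
    rw [div_le_one (htq k)]
    exact Real.rpow_le_rpow (htpos m).le (htmono hk) hq0.le
  have hlam0 : ∀ k, 0 ≤ t m ^ q / t k ^ q := fun k => le_of_lt (div_pos (htq m) (htq k))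
  have hsum_nonneg : (0:ℝ) ≤ ∑ k ∈ Finset.range m, (1 - t m ^ q / t k ^ q) :=
    Finset.sum_nonneg fun k hk => by
      have := hlam k (le_of_lt (Finset.mem_range.mp hk)); linarith
  have hE0 : (0:ℝ) ≤ E := by
    have h1 : (0:ℝ) ≤ ε ^ q * ∑ k ∈ Finset.range m, (1 - t m ^ q / t k ^ q) :=
      mul_nonneg hεq.le hsum_nonneg
    rw [hE]; linarith [htq m]
  set dq : ℝ := t m ^ q * (1 - ε ^ q * S) with hdq
  have hdq0 : 0 ≤ dq := mul_nonneg (htq m).le hm1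
  set d : ℝ := dq ^ (1/q) with hd
  have hd0 : 0 ≤ d := Real.rpow_nonneg hdq0 _
  have hdpow : d ^ q = dq := by
    rw [hd, ← Real.rpow_mul hdq0, one_div_mul_cancel hq0.ne', Real.rpow_one]
  have hsum_lam : ∑ k ∈ Finset.range m, t m ^ q / t k ^ q = t m ^ q * S := by
    rw [hS, Finset.mul_sum]
    exact Finset.sum_congr rfl fun k _ => by rw [div_eq_mul_one_div]
  have hEid : E = m * ε ^ q + dq := by
    rw [hE, hdq]
    have h1 : ∑ k ∈ Finset.range m, (1 - t m ^ q / t k ^ q) = m - t m ^ q * S := by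
      rw [Finset.sum_sub_distrib, hsum_lam, Finset.sum_const, Finset.card_range]
      simp
    rw [h1]; ring
  have hdq_lt : dq < ε ^ q := by
    rw [Finset.sum_range_succ] at hm2
    have h2 : 1 - ε ^ q * S < ε ^ q * (1 / t m ^ q) := by rw [hS]; linarith
    rw [hdq]
    calc t m ^ q * (1 - ε ^ q * S) < t m ^ q * (ε ^ q * (1 / t m ^ q)) :=
          (mul_lt_mul_iff_right₀ (htq m)).mpr h2
      _ = ε ^ q := by
          rw [mul_one_div, mul_div_assoc']
          exact mul_div_cancel_left₀ _ (htq m).ne'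
  have hd_le : d ≤ ε := by
    have h := Real.rpow_le_rpow hdq0 hdq_lt.le (by positivity : (0:ℝ) ≤ 1/q)
    rwa [← Real.rpow_mul hε.le, mul_one_div_cancel hq0.ne', Real.rpow_one, ← hd] at h
  -- the extremal element x*
  set xs : ℕ → ℂ := fun k => if k < m then (ε:ℂ) else if k = m then (d:ℂ) else 0 with hxs
  have hxs_norm : ∀ k, ‖xs k‖ = if k < m then ε else if k = m then d else 0 := by
    intro k
    rw [hxs]
    by_cases hk : k < m
    · simp [hk, Complex.norm_real, abs_of_pos hε]
    · by_cases hk' : k = m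
      · simp [hk, hk', Complex.norm_real, abs_of_nonneg hd0]
      · simp [hk, hk']
  have hxs_eps : ∀ k, ‖xs k‖ ≤ ε := by
    intro k
    rw [hxs_norm k]
    split_ifs with h1 h2
    · exact le_rfl
    · exact hd_le
    · exact hε.le
  have hxs_supp : ∀ k ∉ Finset.range (m+1), (‖xs k‖₊ : ℝ≥0∞) ^ q = 0 := by
    intro k hk
    rw [Finset.mem_range, not_lt] at hk
    have h1 : ¬ k < m := by omega
    have h2 : ¬ k = m := by omega
    rw [enn_nnnorm_rpow hq0, hxs_norm k, if_neg h1, if_neg h2,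
      Real.zero_rpow hq0.ne', ENNReal.ofReal_zero]
  have hxs_sum : ∑ k ∈ Finset.range (m+1), ‖xs k‖ ^ q = E := by
    rw [Finset.sum_range_succ, hEid]
    have h1 : ∀ k ∈ Finset.range m, ‖xs k‖ ^ q = ε ^ q := by
      intro k hk
      rw [hxs_norm k, if_pos (Finset.mem_range.mp hk)]
    rw [Finset.sum_congr rfl h1, Finset.sum_const, Finset.card_range, nsmul_eq_mul,
      hxs_norm m, if_neg (lt_irrefl m), if_pos rfl, hdpow]
  have hA : ∑' k, (‖xs k‖₊ : ℝ≥0∞) ^ q = ENNReal.ofReal E := by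
    rw [tsum_eq_sum hxs_supp]
    have h1 : ∀ k ∈ Finset.range (m+1), (‖xs k‖₊ : ℝ≥0∞) ^ q = ENNReal.ofReal (‖xs k‖ ^ q) :=
      fun k _ => enn_nnnorm_rpow hq0 _
    rw [Finset.sum_congr rfl h1,
      ← ENNReal.ofReal_sum_of_nonneg (fun k _ => Real.rpow_nonneg (norm_nonneg _) q), hxs_sum]
  have hlq_xs : lqNorm q xs = ENNReal.ofReal (E ^ (1/q)) := by
    rw [lqNorm, hA, ENNReal.ofReal_rpow_of_nonneg hE0 (by positivity : (0:ℝ) ≤ 1/q)]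
  -- x* ∈ W
  have htne : ∀ k, ((t k : ℝ) : ℂ) ≠ 0 := fun k => by
    exact_mod_cast Complex.ofReal_ne_zero.mpr (htpos k).ne'
  have hhs_mem : lqNorm q (fun k => xs k / (t k : ℂ)) ≤ 1 := by
    have hsupp : ∀ k ∉ Finset.range (m+1), (‖xs k / (t k : ℂ)‖₊ : ℝ≥0∞) ^ q = 0 := by
      intro k hk
      rw [Finset.mem_range, not_lt] at hk
      have h1 : ¬ k < m := by omega
      have h2 : ¬ k = m := by omega
      have : xs k = 0 := by rw [hxs]; simp [h1, h2]
      rw [this, zero_div]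
      simp [ENNReal.zero_rpow_of_pos hq0]
    have hnorm : ∀ k, ‖xs k / (t k : ℂ)‖ ^ q = ‖xs k‖ ^ q / t k ^ q := by
      intro k
      rw [norm_div, Complex.norm_real, Real.norm_eq_abs, abs_of_pos (htpos k),
        Real.div_rpow (norm_nonneg _) (htpos k).le]
    have hsum1 : ∑ k ∈ Finset.range (m+1), ‖xs k / (t k : ℂ)‖ ^ q = 1 := by
      have h1 : ∀ k ∈ Finset.range (m+1), ‖xs k / (t k : ℂ)‖ ^ q = ‖xs k‖ ^ q / t k ^ q :=
        fun k _ => hnorm k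
      rw [Finset.sum_congr rfl h1, Finset.sum_range_succ]
      have h2 : ∀ k ∈ Finset.range m, ‖xs k‖ ^ q / t k ^ q = ε ^ q * (1 / t k ^ q) := by
        intro k hk
        rw [hxs_norm k, if_pos (Finset.mem_range.mp hk)]; ring
      rw [Finset.sum_congr rfl h2, ← Finset.mul_sum, ← hS, hxs_norm m,
        if_neg (lt_irrefl m), if_pos rfl, hdpow, hdq,
        mul_div_cancel_left₀ _ (htq m).ne']
      ring
    rw [lqNorm, tsum_eq_sum hsupp]
    have h1 : ∀ k ∈ Finset.range (m+1),
        (‖xs k / (t k : ℂ)‖₊ : ℝ≥0∞) ^ q = ENNReal.ofReal (‖xs k / (t k : ℂ)‖ ^ q) :=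
      fun k _ => enn_nnnorm_rpow hq0 _
    rw [Finset.sum_congr rfl h1,
      ← ENNReal.ofReal_sum_of_nonneg (fun k _ => Real.rpow_nonneg (norm_nonneg _) q), hsum1]
    rw [ENNReal.ofReal_one, ENNReal.one_rpow]
  have hxs_mem : xs ∈ WT q t := by
    refine ⟨fun k => xs k / (t k : ℂ), fun k => ?_, hhs_mem⟩
    rw [mul_div_cancel₀ _ (htne k)]
  have hxs_mem_neg : (fun k => -xs k) ∈ WT q t := by
    refine ⟨fun k => -(xs k / (t k : ℂ)), fun k => ?_, ?_⟩
    · rw [mul_neg, mul_div_cancel₀ _ (htne k)]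
    · exact (lqNorm_neg q _).trans_le hhs_mem
  -- lower bound: every method has error at least ofReal (E ^ (1/q))
  have hlow : ∀ Φ : (ℕ → ℂ) → ℕ → ℂ,
      ENNReal.ofReal (E ^ (1/q)) ≤ recErr q (WT q t) (infoSupFull ε) Φ := by
    intro Φ
    have h0mem : (0 : ℕ → ℂ) ∈ infoSupFull ε xs := by
      intro k; simpa using hxs_eps k
    have h0memneg : (0 : ℕ → ℂ) ∈ infoSupFull ε (fun k => -xs k) := by
      intro k; simpa using hxs_eps k
    have hA' : lqNorm q (fun k => xs k - Φ 0 k) ≤ recErr q (WT q t) (infoSupFull ε) Φ :=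
      le_recErr hxs_mem h0mem
    have hB' : lqNorm q (fun k => xs k + Φ 0 k) ≤ recErr q (WT q t) (infoSupFull ε) Φ := by
      have h2 := le_recErr (q := q) (Φ := Φ) hxs_mem_neg h0memneg
      have h3 : (fun k => (fun j => -xs j) k - Φ 0 k) = fun k => -(xs k + Φ 0 k) := by
        funext k; ring
      rwa [h3, lqNorm_neg] at h2
    have hsum : 2 * lqNorm q xs ≤ 2 * recErr q (WT q t) (infoSupFull ε) Φ := by
      calc 2 * lqNorm q xs = lqNorm q (fun k => (2:ℂ) * xs k) := (lqNorm_two_smul hq0 xs).symm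
        _ = lqNorm q (fun k => (xs k - Φ 0 k) + (xs k + Φ 0 k)) := by
            congr 1; funext k; ring
        _ ≤ lqNorm q (fun k => xs k - Φ 0 k) + lqNorm q (fun k => xs k + Φ 0 k) :=
            lqNorm_add_le hq _ _
        _ ≤ _ + _ := add_le_add hA' hB'
        _ = 2 * recErr q (WT q t) (infoSupFull ε) Φ := (two_mul _).symm
    have h4 := (ENNReal.mul_le_mul_iff_right two_ne_zero ENNReal.ofNat_ne_top).mp hsum
    rwa [hlq_xs] at h4
  -- upper bound for the method Φ*_m
  have hupper : recErr q (WT q t) (infoSupFull ε) (PhiStarFull q t m)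
      ≤ ENNReal.ofReal (E ^ (1/q)) := by
    refine recErr_le fun x hx a ha => ?_
    obtain ⟨h, hxh, hh1⟩ := hx
    have hhk : ∀ k, ‖x k‖ ^ q = t k ^ q * ‖h k‖ ^ q := by
      intro k
      rw [hxh k, norm_mul, Complex.norm_real, Real.norm_eq_abs, abs_of_pos (htpos k),
        Real.mul_rpow (htpos k).le (norm_nonneg _)]
    have key : ∀ k, (‖x k - PhiStarFull q t m a k‖₊ : ℝ≥0∞) ^ q
        ≤ ENNReal.ofReal (if k < m then (1 - t m ^ q / t k ^ q) * ε ^ q else 0)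
          + ENNReal.ofReal (t m ^ q) * (‖h k‖₊ : ℝ≥0∞) ^ q := by
      intro k
      by_cases hk : k < m
      · have hl1 := hlam k hk.le
        have hl0 := hlam0 k
        have hco : x k - PhiStarFull q t m a k
            = ((1 - t m ^ q / t k ^ q : ℝ) : ℂ) * (x k - a k)
              + ((t m ^ q / t k ^ q : ℝ) : ℂ) * x k := by
          simp only [PhiStarFull, if_pos hk]; push_cast; ring
        have hnorm : ‖x k - PhiStarFull q t m a k‖
            ≤ (1 - t m ^ q / t k ^ q) * ε + (t m ^ q / t k ^ q) * ‖x k‖ := by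
          rw [hco]
          refine (norm_add_le _ _).trans ?_
          rw [norm_mul, norm_mul, Complex.norm_real, Complex.norm_real, Real.norm_eq_abs,
            Real.norm_eq_abs, abs_of_nonneg (by linarith), abs_of_nonneg hl0]
          exact add_le_add (mul_le_mul_of_nonneg_left (ha k) (by linarith)) le_rfl
        have hub : ‖x k - PhiStarFull q t m a k‖ ^ q
            ≤ (1 - t m ^ q / t k ^ q) * ε ^ q + t m ^ q * ‖h k‖ ^ q := by
          calc ‖x k - PhiStarFull q t m a k‖ ^ q
              ≤ ((1 - t m ^ q / t k ^ q) * ε + (t m ^ q / t k ^ q) * ‖x k‖) ^ q := by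
                refine Real.rpow_le_rpow (norm_nonneg _) hnorm hq0.le
            _ ≤ (1 - t m ^ q / t k ^ q) * ε ^ q + (t m ^ q / t k ^ q) * ‖x k‖ ^ q :=
                convex_rpow_ineq hq hε.le (norm_nonneg _) hl0 hl1
            _ = (1 - t m ^ q / t k ^ q) * ε ^ q + t m ^ q * ‖h k‖ ^ q := by
                rw [hhk k, ← mul_assoc, div_mul_cancel₀ _ (htq k).ne']
        rw [enn_nnnorm_rpow hq0, enn_nnnorm_rpow hq0 (h k), if_pos hk,
          ← ENNReal.ofReal_mul (htq m).le,
          ← ENNReal.ofReal_add (mul_nonneg (by linarith) hεq.le)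
            (mul_nonneg (htq m).le (Real.rpow_nonneg (norm_nonneg _) q))]
        exact ENNReal.ofReal_le_ofReal hub
      · have hz : PhiStarFull q t m a k = 0 := if_neg hk
        have hub : ‖x k - PhiStarFull q t m a k‖ ^ q ≤ t m ^ q * ‖h k‖ ^ q := by
          rw [hz, sub_zero, hhk k]
          exact mul_le_mul_of_nonneg_right
            (Real.rpow_le_rpow (htpos k).le (htmono (not_lt.mp hk)) hq0.le)
            (Real.rpow_nonneg (norm_nonneg _) q)
        rw [enn_nnnorm_rpow hq0, enn_nnnorm_rpow hq0 (h k), if_neg hk, ENNReal.ofReal_zero,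
          zero_add, ← ENNReal.ofReal_mul (htq m).le]
        exact ENNReal.ofReal_le_ofReal hub
    have hc_supp : ∀ k ∉ Finset.range m,
        ENNReal.ofReal (if k < m then (1 - t m ^ q / t k ^ q) * ε ^ q else 0) = 0 := by
      intro k hk
      rw [if_neg (Finset.mem_range.not.mp hk), ENNReal.ofReal_zero]
    have hcsum : ∑' k, ENNReal.ofReal (if k < m then (1 - t m ^ q / t k ^ q) * ε ^ q else 0)
        = ENNReal.ofReal (ε ^ q * ∑ k ∈ Finset.range m, (1 - t m ^ q / t k ^ q)) := by
      rw [tsum_eq_sum hc_supp]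
      have h1 : ∀ k ∈ Finset.range m,
          ENNReal.ofReal (if k < m then (1 - t m ^ q / t k ^ q) * ε ^ q else 0)
          = ENNReal.ofReal ((1 - t m ^ q / t k ^ q) * ε ^ q) := by
        intro k hk; rw [if_pos (Finset.mem_range.mp hk)]
      rw [Finset.sum_congr rfl h1, ← ENNReal.ofReal_sum_of_nonneg]
      · congr 1
        rw [Finset.mul_sum]
        exact Finset.sum_congr rfl fun k _ => mul_comm _ _
      · intro k hk
        have := hlam k (le_of_lt (Finset.mem_range.mp hk))
        nlinarith
    have hsum : ∑' k, (‖x k - PhiStarFull q t m a k‖₊ : ℝ≥0∞) ^ q ≤ ENNReal.ofReal E := by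
      calc ∑' k, (‖x k - PhiStarFull q t m a k‖₊ : ℝ≥0∞) ^ q
          ≤ ∑' k, (ENNReal.ofReal (if k < m then (1 - t m ^ q / t k ^ q) * ε ^ q else 0)
              + ENNReal.ofReal (t m ^ q) * (‖h k‖₊ : ℝ≥0∞) ^ q) := ENNReal.tsum_le_tsum key
        _ = (∑' k, ENNReal.ofReal (if k < m then (1 - t m ^ q / t k ^ q) * ε ^ q else 0))
              + ENNReal.ofReal (t m ^ q) * ∑' k, (‖h k‖₊ : ℝ≥0∞) ^ q := by
            rw [ENNReal.tsum_add, ENNReal.tsum_mul_left]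
        _ ≤ ENNReal.ofReal (ε ^ q * ∑ k ∈ Finset.range m, (1 - t m ^ q / t k ^ q))
              + ENNReal.ofReal (t m ^ q) * 1 := by
            rw [hcsum]
            exact add_le_add_right (mul_le_mul_right (tsum_le_one_of_lqNorm hq0 h hh1) _) _
        _ = ENNReal.ofReal E := by
            rw [mul_one, ← ENNReal.ofReal_add (mul_nonneg hεq.le hsum_nonneg) (htq m).le, hE]
            congr 1; ring
    rw [lqNorm, ← ENNReal.ofReal_rpow_of_nonneg hE0 (by positivity : (0:ℝ) ≤ 1/q)]
    exact ENNReal.rpow_le_rpow hsum (by positivity)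
  -- conclusion
  have hinf_le : optErr q (WT q t) (infoSupFull ε)
      ≤ recErr q (WT q t) (infoSupFull ε) (PhiStarFull q t m) := iInf_le _ _
  have hle_inf : ENNReal.ofReal (E ^ (1/q)) ≤ optErr q (WT q t) (infoSupFull ε) :=
    le_iInf hlow
  exact ⟨le_antisymm hinf_le (hupper.trans hle_inf),
    le_antisymm hupper (hle_inf.trans hinf_le)⟩
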